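/- Assume |J| = 1, the travel times τ have a differentiable convex potential Φ (τ(x) = ∇Φ(x) on ℱ), all externality factors g_{i,p} are constant, and the budget B ∈ ℝ_{≥0} is feasible. Define λ̲ = min{λ ≥ 0 : there exists x ∈ WE(λ) with G(x) ≤ B} and λ̄ = sup({λ ≥ 0 : there exists x ∈ WE(λ) with G(x) ≥ B} ∪ {0}) ∈ [0, ∞]. Then a price λ ∈ ℝ_{≥0} is a market equilibrium price for the tradable credit scheme (B, g), i.e., there exists x ∈ WE(λ) with G(x) ≤ B and λ·(G(x) − B) = 0, if and only if λ̲ ≤ λ ≤ λ̄. -/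

import Mathlib

open Finset

variable {I : Type*} [Fintype I] [DecidableEq I]
  {P : I → Type*} [∀ i, Fintype (P i)] [∀ i, DecidableEq (P i)]

/-- A flow is feasible if it is nonnegative and satisfies all demands. -/
def Feasible (d : I → ℝ) (x : ∀ i, P i → ℝ) : Prop :=
  (∀ i p, 0 ≤ x i p) ∧ ∀ i, ∑ p, x i p = d i

/-- Wardrop equilibrium with respect to a cost function. -/
def IsWardrop (d : I → ℝ) (c : (∀ i, P i → ℝ) → ∀ i, P i → ℝ)
    (x : ∀ i, P i → ℝ) : Prop :=
  Feasible d x ∧ ∀ i p, 0 < x i p → ∀ q, c x i p ≤ c x i q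

/-- Total externality for a single externality class with constant factors `g`. -/
def Gtot (g : ∀ i, P i → ℝ) (x : ∀ i, P i → ℝ) : ℝ :=
  ∑ i, ∑ p, g i p * x i p

/-- `λ` is a market equilibrium price for the tradable credit scheme `(B, g)`. -/
def IsMarketEqPrice (d : I → ℝ) (τ : (∀ i, P i → ℝ) → ∀ i, P i → ℝ)
    (g : ∀ i, P i → ℝ) (B : ℝ) (lam : ℝ) : Prop :=
  ∃ x, IsWardrop d (fun y i p => τ y i p + lam * g i p) x ∧
    Gtot g x ≤ B ∧ lam * (Gtot g x - B) = 0


set_option linter.unusedSectionVars false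

lemma Gtot_add (g x y : ∀ i, P i → ℝ) : Gtot g (x + y) = Gtot g x + Gtot g y := by
  simp [Gtot, mul_add, Finset.sum_add_distrib]

lemma Gtot_smul (g : ∀ i, P i → ℝ) (a : ℝ) (x : ∀ i, P i → ℝ) :
    Gtot g (a • x) = a * Gtot g x := by
  simp [Gtot, Finset.mul_sum, mul_left_comm]

lemma Gtot_sub (g x y : ∀ i, P i → ℝ) : Gtot g (x - y) = Gtot g x - Gtot g y := by
  simp [Gtot, mul_sub, Finset.sum_sub_distrib]

/-- `Gtot` as a continuous linear map. -/
noncomputable def Glin (g : ∀ i, P i → ℝ) : (∀ i, P i → ℝ) →L[ℝ] ℝ :=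
  LinearMap.toContinuousLinearMap
    { toFun := Gtot g
      map_add' := fun x y => Gtot_add g x y
      map_smul' := fun a x => by simpa using Gtot_smul g a x }

lemma Glin_apply (g x : ∀ i, P i → ℝ) : Glin g x = Gtot g x := rfl

lemma Gtot_continuous (g : ∀ i, P i → ℝ) : Continuous (Gtot g) := by
  have : Continuous (Glin g) := (Glin g).continuous
  simpa [funext (Glin_apply g)] using this

lemma Gtot_single (g : ∀ i, P i → ℝ) (i : I) (p : P i) :
    Gtot g (Pi.single i (Pi.single p (1 : ℝ))) = g i p := by
  rw [Gtot, Finset.sum_eq_single i]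
  · simp [Pi.single_apply]
  · intro j _ hj
    have h0 : Pi.single (M := fun i => P i → ℝ) i (Pi.single p (1:ℝ)) j = 0 := by rw [Pi.single_eq_of_ne hj]
    simp [h0]
  · simp

section Calc

variable {E : Type*} [NormedAddCommGroup E] [NormedSpace ℝ E]

lemma min_hasDerivAt_nonneg (f : ℝ → ℝ) (D t₀ : ℝ) (ht₀ : 0 < t₀)
    (hd : HasDerivAt f D 0) (hmin : ∀ t ∈ Set.Icc 0 t₀, f 0 ≤ f t) : 0 ≤ D := by
  have ht := hasDerivAt_iff_tendsto_slope.1 hd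
  have ht' : Filter.Tendsto (slope f 0) (nhdsWithin 0 (Set.Ioi 0)) (nhds D) :=
    ht.mono_left (nhdsWithin_mono _ (fun t (h : t ∈ Set.Ioi 0) => ne_of_gt h))
  refine ge_of_tendsto ht' ?_
  filter_upwards [Ioo_mem_nhdsGT_of_mem (Set.mem_Ico.2 ⟨le_refl 0, ht₀⟩)] with t ht2
  rw [slope_def_field]
  apply div_nonneg
  · have := hmin t ⟨le_of_lt ht2.1, le_of_lt ht2.2⟩; linarith
  · simp [le_of_lt ht2.1]

lemma hasDerivAt_line (f : E → ℝ) (hf : Differentiable ℝ f) (x v : E) :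
    HasDerivAt (fun t : ℝ => f (x + t • v)) (fderiv ℝ f x v) 0 := by
  have hline : HasDerivAt (fun t : ℝ => x + t • v) v 0 := by
    simpa using ((hasDerivAt_id (0:ℝ)).smul_const v).const_add x
  have h0 : x + (0:ℝ) • v = x := by simp
  have hl : HasFDerivAt f (fderiv ℝ f x) (x + (0:ℝ) • v) := h0.symm ▸ (hf x).hasFDerivAt
  exact hl.comp_hasDerivAt 0 hline

lemma grad_ineq (f : E → ℝ) (hdiff : Differentiable ℝ f) (hconv : ConvexOn ℝ Set.univ f)
    (x y : E) : f x + fderiv ℝ f x (y - x) ≤ f y := by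
  set v := y - x with hv
  set φ : ℝ → ℝ := fun t => f (x + t • v) with hφ
  have hd : HasDerivAt φ (fderiv ℝ f x v) 0 := hasDerivAt_line f hdiff x v
  have hslope : ∀ t ∈ Set.Ioo (0:ℝ) 1, slope φ 0 t ≤ f y - f x := by
    intro t ht
    have hcomb : x + t • v = (1 - t) • x + t • y := by
      rw [hv]; module
    have h1 : φ t ≤ (1 - t) * f x + t * f y := by
      rw [hφ]; simp only []
      rw [hcomb]
      have := hconv.2 (Set.mem_univ x) (Set.mem_univ y)
        (by linarith [ht.2] : (0:ℝ) ≤ 1 - t) (le_of_lt ht.1) (by ring)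
      simpa using this
    have h0 : φ 0 = f x := by simp [hφ]
    rw [slope_def_field, sub_zero, div_le_iff₀ ht.1]
    rw [h0]; nlinarith [ht.1, ht.2]
  have ht := hasDerivAt_iff_tendsto_slope.1 hd
  have ht' : Filter.Tendsto (slope φ 0) (nhdsWithin 0 (Set.Ioi 0)) (nhds (fderiv ℝ f x v)) :=
    ht.mono_left (nhdsWithin_mono _ (fun t (h : t ∈ Set.Ioi 0) => ne_of_gt h))
  have hle : fderiv ℝ f x v ≤ f y - f x := by
    refine le_of_tendsto ht' ?_
    filter_upwards [Ioo_mem_nhdsGT_of_mem (Set.mem_Ico.2 ⟨le_refl 0, zero_lt_one⟩)] with t ht2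
    exact hslope t ht2
  linarith

end Calc

lemma pi_decomp (v : ∀ i, P i → ℝ) :
    v = ∑ i, ∑ p, v i p • Pi.single (M := fun i => P i → ℝ) i (Pi.single p (1:ℝ)) := by
  funext j q
  rw [Finset.sum_apply, Finset.sum_apply]
  rw [Finset.sum_eq_single j]
  · rw [Finset.sum_apply, Finset.sum_apply]
    rw [Finset.sum_eq_single q]
    · simp
    · intro r _ hr
      simp [Pi.single_apply, hr.symm]
    · simp
  · intro i _ hij
    rw [Finset.sum_apply, Finset.sum_apply]
    apply Finset.sum_eq_zero
    intro p _
    have h0 : Pi.single (M := fun i => P i → ℝ) i (Pi.single p (1:ℝ)) j = 0 := by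
      rw [Pi.single_eq_of_ne hij.symm]
    simp [h0]
  · simp

lemma fderiv_apply_sum (Φ : (∀ i, P i → ℝ) → ℝ) (x v : ∀ i, P i → ℝ) (T : ∀ i, P i → ℝ)
    (hT : ∀ i p, fderiv ℝ Φ x (Pi.single i (Pi.single p (1 : ℝ))) = T i p) :
    fderiv ℝ Φ x v = ∑ i, ∑ p, v i p * T i p := by
  conv_lhs => rw [pi_decomp v]
  rw [map_sum]
  refine Finset.sum_congr rfl fun i _ => ?_
  rw [map_sum]
  refine Finset.sum_congr rfl fun p _ => ?_
  rw [(fderiv ℝ Φ x).map_smul, hT]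
  simp


lemma feasible_isClosed (d : I → ℝ) : IsClosed {x : ∀ i, P i → ℝ | Feasible d x} := by
  have : {x : ∀ i, P i → ℝ | Feasible d x} =
      (⋂ i, ⋂ p, {x : ∀ i, P i → ℝ | 0 ≤ x i p}) ∩ (⋂ i, {x : ∀ i, P i → ℝ | ∑ p, x i p = d i}) := by
    ext x
    simp [Feasible, Set.mem_iInter]
  rw [this]
  refine IsClosed.inter ?_ ?_
  · refine isClosed_iInter fun i => isClosed_iInter fun p => ?_
    exact isClosed_le continuous_const ((continuous_apply p).comp (continuous_apply i))
  · refine isClosed_iInter fun i => ?_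
    exact isClosed_eq (continuous_finset_sum _
      (fun p _ => (continuous_apply p).comp (continuous_apply i))) continuous_const

lemma feasible_isCompact (d : I → ℝ) : IsCompact {x : ∀ i, P i → ℝ | Feasible d x} := by
  have hK : IsCompact (Set.pi Set.univ fun i => Set.pi Set.univ fun _ : P i => Set.Icc (0:ℝ) (d i)) :=
    isCompact_univ_pi fun i => isCompact_univ_pi fun _ => isCompact_Icc
  refine hK.of_isClosed_subset (feasible_isClosed d) ?_
  · intro x hx
    refine Set.mem_univ_pi.2 fun i => Set.mem_univ_pi.2 fun p => ?_
    refine Set.mem_Icc.2 ⟨hx.1 i p, ?_⟩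
    calc x i p ≤ ∑ q, x i q := Finset.single_le_sum (fun q _ => hx.1 i q) (Finset.mem_univ p)
    _ = d i := hx.2 i

lemma feasible_nonempty [∀ i, Nonempty (P i)] (d : I → ℝ) (hd : ∀ i, 0 ≤ d i) :
    ∃ x : ∀ i, P i → ℝ, Feasible d x := by
  refine ⟨fun i => Pi.single (M := fun _ : P i => ℝ) (Classical.arbitrary (P i)) (d i), ?_, ?_⟩
  · intro i p
    rcases eq_or_ne p (Classical.arbitrary (P i)) with h | h
    · subst h; simp [hd i]
    · simp [Pi.single_eq_of_ne h]
  · intro i; simp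

lemma exists_min [∀ i, Nonempty (P i)] (d : I → ℝ) (hd : ∀ i, 0 ≤ d i)
    (f : (∀ i, P i → ℝ) → ℝ) (hf : Continuous f) :
    ∃ x, Feasible d x ∧ ∀ y, Feasible d y → f x ≤ f y := by
  obtain ⟨x0, hx0⟩ := feasible_nonempty (P := P) d hd
  obtain ⟨x, hx, hmin⟩ := (feasible_isCompact d).exists_isMinOn ⟨x0, hx0⟩ hf.continuousOn
  exact ⟨x, hx, fun y hy => hmin hy⟩

lemma fval_hasFDerivAt (Φ : (∀ i, P i → ℝ) → ℝ) (hΦdiff : Differentiable ℝ Φ)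
    (g : ∀ i, P i → ℝ) (lam : ℝ) (x : ∀ i, P i → ℝ) :
    HasFDerivAt (fun z => Φ z + lam * Gtot g z) (fderiv ℝ Φ x + lam • Glin g) x := by
  have h1 := (hΦdiff x).hasFDerivAt
  have h2 : HasFDerivAt (fun z => Gtot g z) (Glin g) x := (Glin g).hasFDerivAt
  exact h1.add (h2.const_mul lam)

lemma fval_diff (Φ : (∀ i, P i → ℝ) → ℝ) (hΦdiff : Differentiable ℝ Φ)
    (g : ∀ i, P i → ℝ) (lam : ℝ) :
    Differentiable ℝ (fun z => Φ z + lam * Gtot g z) :=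
  fun x => (fval_hasFDerivAt Φ hΦdiff g lam x).differentiableAt

lemma fval_fderiv_apply (Φ : (∀ i, P i → ℝ) → ℝ) (hΦdiff : Differentiable ℝ Φ)
    (g : ∀ i, P i → ℝ) (lam : ℝ) (x v : ∀ i, P i → ℝ) :
    fderiv ℝ (fun z => Φ z + lam * Gtot g z) x v = fderiv ℝ Φ x v + lam * Gtot g v := by
  rw [(fval_hasFDerivAt Φ hΦdiff g lam x).fderiv]
  simp [Glin_apply]

lemma fval_convex (Φ : (∀ i, P i → ℝ) → ℝ) (hΦconv : ConvexOn ℝ Set.univ Φ)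
    (g : ∀ i, P i → ℝ) (lam : ℝ) :
    ConvexOn ℝ Set.univ (fun z => Φ z + lam * Gtot g z) := by
  refine ⟨convex_univ, ?_⟩
  intro x _ y _ a b ha hb hab
  have h1 := hΦconv.2 (Set.mem_univ x) (Set.mem_univ y) ha hb hab
  have h2 : Gtot g (a • x + b • y) = a * Gtot g x + b * Gtot g y := by
    rw [Gtot_add, Gtot_smul, Gtot_smul]
  simp only [smul_eq_mul] at h1 ⊢
  rw [h2]
  nlinarith [h1]

lemma isWardrop_imp_min [∀ i, Nonempty (P i)]
    (d : I → ℝ) (τ : (∀ i, P i → ℝ) → ∀ i, P i → ℝ) (Φ : (∀ i, P i → ℝ) → ℝ)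
    (hΦdiff : Differentiable ℝ Φ) (hΦconv : ConvexOn ℝ Set.univ Φ)
    (hΦgrad : ∀ x, Feasible d x →
      ∀ i p, fderiv ℝ Φ x (Pi.single i (Pi.single p (1 : ℝ))) = τ x i p)
    (g : ∀ i, P i → ℝ) (lam : ℝ) (x : ∀ i, P i → ℝ)
    (hx : IsWardrop d (fun y i p => τ y i p + lam * g i p) x) :
    ∀ y, Feasible d y → Φ x + lam * Gtot g x ≤ Φ y + lam * Gtot g y := by
  intro y hy
  set C := fun i (p : P i) => τ x i p + lam * g i p with hC
  have key := grad_ineq (fun z => Φ z + lam * Gtot g z)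
    (fval_diff Φ hΦdiff g lam) (fval_convex Φ hΦconv g lam) x y
  have hfd : fderiv ℝ (fun z => Φ z + lam * Gtot g z) x (y - x)
      = ∑ i, ∑ p, (y i p - x i p) * C i p := by
    rw [fval_fderiv_apply Φ hΦdiff g lam,
      fderiv_apply_sum Φ x (y - x) (fun i p => τ x i p) (hΦgrad x hx.1), Gtot,
      Finset.mul_sum, ← Finset.sum_add_distrib]
    refine Finset.sum_congr rfl fun i _ => ?_
    rw [Finset.mul_sum, ← Finset.sum_add_distrib]
    refine Finset.sum_congr rfl fun p _ => ?_
    have hsub : (y - x) i p = y i p - x i p := rfl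
    rw [hsub, hC]; ring
  have hkey : ∀ i, ∑ p, x i p * C i p ≤ ∑ p, y i p * C i p := by
    intro i
    obtain ⟨q0, _, hq0⟩ := Finset.exists_mem_eq_inf' (Finset.univ_nonempty) (C i)
    have hmle : ∀ p, Finset.univ.inf' Finset.univ_nonempty (C i) ≤ C i p :=
      fun p => Finset.inf'_le _ (Finset.mem_univ p)
    set m := Finset.univ.inf' Finset.univ_nonempty (C i) with hm
    have hx_eq : ∑ p, x i p * C i p = m * d i := by
      have hterm : ∀ p ∈ Finset.univ, x i p * C i p = x i p * m := by
        intro p _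
        rcases (hx.1.1 i p).eq_or_lt with h | h
        · rw [← h]; ring
        · have h1 : C i p ≤ C i q0 := hx.2 i p h q0
          rw [le_antisymm (hq0 ▸ h1) (hmle p)]
      rw [Finset.sum_congr rfl hterm, ← Finset.sum_mul, hx.1.2 i]; ring
    have hy_ge : m * d i ≤ ∑ p, y i p * C i p := by
      calc m * d i = ∑ p, y i p * m := by rw [← Finset.sum_mul, hy.2 i]; ring
      _ ≤ ∑ p, y i p * C i p :=
        Finset.sum_le_sum fun p _ => mul_le_mul_of_nonneg_left (hmle p) (hy.1 i p)
    linarith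
  have hpos : 0 ≤ ∑ i, ∑ p, (y i p - x i p) * C i p := by
    refine Finset.sum_nonneg fun i _ => ?_
    have expand : ∑ p, (y i p - x i p) * C i p
        = ∑ p, y i p * C i p - ∑ p, x i p * C i p := by
      rw [← Finset.sum_sub_distrib]
      exact Finset.sum_congr rfl fun p _ => by ring
    rw [expand]
    linarith [hkey i]
  rw [hfd] at key
  linarith

lemma perturb_feasible (d : I → ℝ) (x : ∀ i, P i → ℝ) (hxF : Feasible d x)
    (i : I) (p q : P i) (hqp : q ≠ p) (t : ℝ) (ht0 : 0 ≤ t) (htp : t ≤ x i p) :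
    Feasible d (x + t • (Pi.single (M := fun i => P i → ℝ) i (Pi.single q (1:ℝ))
      - Pi.single i (Pi.single p 1))) := by
  set v := Pi.single (M := fun i => P i → ℝ) i (Pi.single q (1:ℝ))
      - Pi.single i (Pi.single p 1) with hv
  have hvj : ∀ j, j ≠ i → v j = 0 := by
    intro j hj
    rw [hv]
    have h1 : Pi.single (M := fun i => P i → ℝ) i (Pi.single q (1:ℝ)) j = 0 := by
      rw [Pi.single_eq_of_ne hj]
    have h2 : Pi.single (M := fun i => P i → ℝ) i (Pi.single p (1:ℝ)) j = 0 := by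
      rw [Pi.single_eq_of_ne hj]
    simp [Pi.sub_apply, h1, h2]
  have hvi : ∀ r, v i r = (if r = q then (1:ℝ) else 0) - (if r = p then 1 else 0) := by
    intro r
    rw [hv]
    simp [Pi.sub_apply, Pi.single_apply]
  constructor
  · intro j r
    rcases eq_or_ne j i with rfl | hj
    · have happ : (x + t • v) j r = x j r + t * v j r := rfl
      rw [happ, hvi r]
      rcases eq_or_ne r q with rfl | hrq
      · rw [if_pos rfl, if_neg hqp]
        have := hxF.1 j r
        nlinarith
      · rcases eq_or_ne r p with rfl | hrp
        · rw [if_neg hrq, if_pos rfl]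
          have := htp
          nlinarith
        · rw [if_neg hrq, if_neg hrp]
          have := hxF.1 j r
          nlinarith
    · have happ : (x + t • v) j r = x j r + t * v j r := rfl
      rw [happ, hvj j hj]
      have := hxF.1 j r
      simp; nlinarith [this]
  · intro j
    have happ : ∀ r, (x + t • v) j r = x j r + t * v j r := fun r => rfl
    rw [Finset.sum_congr rfl (fun r _ => happ r), Finset.sum_add_distrib]
    rcases eq_or_ne j i with rfl | hj
    · have : ∑ r, t * v j r = 0 := by
        rw [← Finset.mul_sum]
        have : ∑ r, v j r = 0 := by
          rw [Finset.sum_congr rfl (fun r _ => hvi r), Finset.sum_sub_distrib]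
          simp [hqp]
        rw [this, mul_zero]
      rw [this, add_zero, hxF.2 j]
    · have : ∑ r, t * v j r = 0 := by
        rw [hvj j hj]; simp
      rw [this, add_zero, hxF.2 j]

lemma min_imp_isWardrop [∀ i, Nonempty (P i)]
    (d : I → ℝ) (τ : (∀ i, P i → ℝ) → ∀ i, P i → ℝ) (Φ : (∀ i, P i → ℝ) → ℝ)
    (hΦdiff : Differentiable ℝ Φ)
    (hΦgrad : ∀ x, Feasible d x →
      ∀ i p, fderiv ℝ Φ x (Pi.single i (Pi.single p (1 : ℝ))) = τ x i p)
    (g : ∀ i, P i → ℝ) (lam : ℝ) (x : ∀ i, P i → ℝ) (hxF : Feasible d x)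
    (hmin : ∀ y, Feasible d y → Φ x + lam * Gtot g x ≤ Φ y + lam * Gtot g y) :
    IsWardrop d (fun y i p => τ y i p + lam * g i p) x := by
  refine ⟨hxF, ?_⟩
  intro i p hxp q
  rcases eq_or_ne q p with rfl | hqp
  · exact le_rfl
  set v := Pi.single (M := fun i => P i → ℝ) i (Pi.single q (1:ℝ))
      - Pi.single i (Pi.single p 1) with hv
  have hD : HasDerivAt (fun t : ℝ => Φ (x + t • v) + lam * Gtot g (x + t • v))
      (fderiv ℝ (fun z => Φ z + lam * Gtot g z) x v) 0 :=
    hasDerivAt_line _ (fval_diff Φ hΦdiff g lam) x v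
  have hDval : fderiv ℝ (fun z => Φ z + lam * Gtot g z) x v
      = (τ x i q + lam * g i q) - (τ x i p + lam * g i p) := by
    rw [fval_fderiv_apply Φ hΦdiff g lam, hv, map_sub, hΦgrad x hxF i q, hΦgrad x hxF i p,
      Gtot_sub, Gtot_single, Gtot_single]
    ring
  have h0 := min_hasDerivAt_nonneg _ _ (x i p) hxp (hDval ▸ hD) ?_
  · simpa using h0  -- 0 ≤ cq - cp
  · intro t ht
    have hfeas := perturb_feasible d x hxF i p q hqp t ht.1 ht.2
    have := hmin _ hfeas
    simpa using this

open Filter in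
lemma lim_min [∀ i, Nonempty (P i)] (d : I → ℝ) (Φ : (∀ i, P i → ℝ) → ℝ)
    (hΦdiff : Differentiable ℝ Φ) (g : ∀ i, P i → ℝ)
    (μ : ℕ → ℝ) (L : ℝ) (hμ : Tendsto μ atTop (nhds L))
    (x : ℕ → ∀ i, P i → ℝ) (hxF : ∀ n, Feasible d (x n))
    (hxmin : ∀ n, ∀ y, Feasible d y → Φ (x n) + μ n * Gtot g (x n) ≤ Φ y + μ n * Gtot g y)
    (C : Set ℝ) (hC : IsClosed C) (hGC : ∀ n, Gtot g (x n) ∈ C) :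
    ∃ z, Feasible d z ∧ (∀ y, Feasible d y → Φ z + L * Gtot g z ≤ Φ y + L * Gtot g y) ∧
      Gtot g z ∈ C := by
  obtain ⟨z, hzF, φ, hφmono, hφtend⟩ := (feasible_isCompact d).tendsto_subseq hxF
  have hμt : Tendsto (fun n => μ (φ n)) atTop (nhds L) := hμ.comp hφmono.tendsto_atTop
  have hGt : Tendsto (fun n => Gtot g (x (φ n))) atTop (nhds (Gtot g z)) :=
    ((Gtot_continuous g).tendsto z).comp hφtend
  refine ⟨z, hzF, ?_, ?_⟩
  · intro y hy
    have h1 : Tendsto (fun n => Φ (x (φ n)) + μ (φ n) * Gtot g (x (φ n))) atTop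
        (nhds (Φ z + L * Gtot g z)) := by
      have hΦt : Tendsto (fun n => Φ (x (φ n))) atTop (nhds (Φ z)) :=
        (hΦdiff.continuous.tendsto z).comp hφtend
      exact hΦt.add (hμt.mul hGt)
    have h2 : Tendsto (fun n => Φ y + μ (φ n) * Gtot g y) atTop
        (nhds (Φ y + L * Gtot g y)) :=
      tendsto_const_nhds.add (hμt.mul_const _)
    exact le_of_tendsto_of_tendsto' h1 h2 (fun n => hxmin (φ n) y hy)
  · exact hC.mem_of_tendsto hGt (Eventually.of_forall fun n => hGC (φ n))

lemma slow_nonempty [∀ i, Nonempty (P i)]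
    (d : I → ℝ) (hd : ∀ i, 0 < d i)
    (τ : (∀ i, P i → ℝ) → ∀ i, P i → ℝ) (Φ : (∀ i, P i → ℝ) → ℝ)
    (hΦdiff : Differentiable ℝ Φ)
    (hΦgrad : ∀ x, Feasible d x →
      ∀ i p, fderiv ℝ Φ x (Pi.single i (Pi.single p (1 : ℝ))) = τ x i p)
    (g : ∀ i, P i → ℝ) (B : ℝ)
    (hBfeas : ∃ x, Feasible d x ∧ Gtot g x ≤ B) :
    ∃ lam0 : ℝ, 0 ≤ lam0 ∧ ∀ lam, lam0 ≤ lam →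
      ∃ x, IsWardrop d (fun y i p => τ y i p + lam * g i p) x ∧ Gtot g x ≤ B := by
  classical
  set b : I → ℝ := fun i => Finset.univ.inf' Finset.univ_nonempty (g i) with hb
  have hb_le : ∀ i p, b i ≤ g i p := fun i p => Finset.inf'_le _ (Finset.mem_univ p)
  set S : Set (∀ i, P i → ℝ) :=
    {x | Feasible d x ∧ ∀ i p, b i < g i p → x i p = 0} with hS
  -- S is compact
  have hSclosed : IsClosed S := by
    have : S = {x : ∀ i, P i → ℝ | Feasible d x} ∩
        ⋂ i, ⋂ p, {x : ∀ i, P i → ℝ | b i < g i p → x i p = 0} := by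
      ext x; simp [hS, Set.mem_iInter]
    rw [this]
    refine (feasible_isClosed d).inter ?_
    refine isClosed_iInter fun i => isClosed_iInter fun p => ?_
    by_cases hlt : b i < g i p
    · have : {x : ∀ i, P i → ℝ | b i < g i p → x i p = 0}
          = {x : ∀ i, P i → ℝ | x i p = 0} := by
        ext x; simp [hlt]
      rw [this]
      exact isClosed_eq ((continuous_apply p).comp (continuous_apply i)) continuous_const
    · have : {x : ∀ i, P i → ℝ | b i < g i p → x i p = 0} = Set.univ := by
        ext x; simp [hlt]
      rw [this]; exact isClosed_univ
  have hScompact : IsCompact S :=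
    (feasible_isCompact d).of_isClosed_subset hSclosed (fun x hx => hx.1)
  -- S is nonempty
  have hpi : ∀ i, ∃ p : P i, g i p = b i := by
    intro i
    obtain ⟨p, _, hp⟩ := Finset.exists_mem_eq_inf' (Finset.univ_nonempty) (g i)
    exact ⟨p, hp.symm⟩
  choose pmin hpmin using hpi
  have hSne : S.Nonempty := by
    refine ⟨fun i => Pi.single (M := fun _ : P i => ℝ) (pmin i) (d i), ⟨?_, ?_⟩, ?_⟩
    · intro i p
      rcases eq_or_ne p (pmin i) with rfl | h
      · simp [(hd i).le]
      · simp [Pi.single_eq_of_ne h]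
    · intro i; simp
    · intro i p hlt
      have hne : p ≠ pmin i := by
        intro h; rw [h, hpmin i] at hlt; exact lt_irrefl _ hlt
      simp [Pi.single_eq_of_ne hne]
  -- minimize Φ on S
  obtain ⟨xs, hxsS, hxsmin⟩ := hScompact.exists_isMinOn hSne hΦdiff.continuous.continuousOn
  have hxsF : Feasible d xs := hxsS.1
  -- G xs ≤ B
  have hGxs : Gtot g xs ≤ B := by
    obtain ⟨y0, hy0F, hy0B⟩ := hBfeas
    have h1 : Gtot g xs = ∑ i, b i * d i := by
      rw [Gtot]
      refine Finset.sum_congr rfl fun i _ => ?_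
      have : ∀ p ∈ Finset.univ, g i p * xs i p = b i * xs i p := by
        intro p _
        rcases (hb_le i p).eq_or_lt with h | h
        · rw [← h]
        · rw [hxsS.2 i p h, mul_zero, mul_zero]
      rw [Finset.sum_congr rfl this, ← Finset.mul_sum, hxsF.2 i]
    have h2 : ∑ i, b i * d i ≤ Gtot g y0 := by
      rw [Gtot]
      refine Finset.sum_le_sum fun i _ => ?_
      calc b i * d i = ∑ p, b i * y0 i p := by rw [← Finset.mul_sum, hy0F.2 i]
      _ ≤ ∑ p, g i p * y0 i p :=
        Finset.sum_le_sum fun p _ => mul_le_mul_of_nonneg_right (hb_le i p) (hy0F.1 i p)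
    linarith
  -- choose lam0
  set h : (Σ i : I, P i × P i) → ℝ := fun s =>
    if b s.1 < g s.1 s.2.2 then (τ xs s.1 s.2.1 - τ xs s.1 s.2.2) / (g s.1 s.2.2 - b s.1)
    else 0 with hh
  obtain ⟨M, hM⟩ := (Set.finite_range h).bddAbove
  refine ⟨max M 0, le_max_right _ _, ?_⟩
  intro lam hlam
  refine ⟨xs, ⟨hxsF, ?_⟩, hGxs⟩
  intro i p hxp q
  have hgp : g i p = b i := by
    by_contra hne
    have hlt : b i < g i p := (hb_le i p).lt_of_ne (Ne.symm hne)
    rw [hxsS.2 i p hlt] at hxp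
    exact lt_irrefl _ hxp
  by_cases hq : b i < g i q
  · have hMle : h ⟨i, (p, q)⟩ ≤ M := hM (Set.mem_range_self _)
    have hval : h ⟨i, (p, q)⟩ = (τ xs i p - τ xs i q) / (g i q - b i) := by
      rw [hh]; simp [hq]
    have hpos : 0 < g i q - b i := by linarith
    have : (τ xs i p - τ xs i q) / (g i q - b i) ≤ lam := by
      calc (τ xs i p - τ xs i q) / (g i q - b i) = h ⟨i, (p, q)⟩ := hval.symm
      _ ≤ M := hMle
      _ ≤ max M 0 := le_max_left _ _
      _ ≤ lam := hlam
    rw [div_le_iff₀ hpos] at this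
    simp only []
    rw [hgp]
    nlinarith
  · have hgq : g i q = b i := le_antisymm (not_lt.1 hq) (hb_le i q)
    rcases eq_or_ne q p with rfl | hqp
    · exact le_rfl
    -- within-face comparison: τ xs i p ≤ τ xs i q
    set v := Pi.single (M := fun i => P i → ℝ) i (Pi.single q (1:ℝ))
        - Pi.single i (Pi.single p 1) with hv
    have hvj : ∀ j, j ≠ i → v j = 0 := by
      intro j hj
      rw [hv]
      have h1 : Pi.single (M := fun i => P i → ℝ) i (Pi.single q (1:ℝ)) j = 0 := by
        rw [Pi.single_eq_of_ne hj]
      have h2 : Pi.single (M := fun i => P i → ℝ) i (Pi.single p (1:ℝ)) j = 0 := by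
        rw [Pi.single_eq_of_ne hj]
      simp [h1, h2]
    have hvi : ∀ r, v i r = (if r = q then (1:ℝ) else 0) - (if r = p then 1 else 0) := by
      intro r; rw [hv]; simp [Pi.single_apply]
    have hD : HasDerivAt (fun t : ℝ => Φ (xs + t • v)) (fderiv ℝ Φ xs v) 0 :=
      hasDerivAt_line Φ hΦdiff xs v
    have hDval : fderiv ℝ Φ xs v = τ xs i q - τ xs i p := by
      rw [hv, map_sub, hΦgrad xs hxsF i q, hΦgrad xs hxsF i p]
    have h0 : (0:ℝ) ≤ τ xs i q - τ xs i p := by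
      refine min_hasDerivAt_nonneg _ _ (xs i p) hxp (hDval ▸ hD) ?_
      intro t ht
      have hfeas : Feasible d (xs + t • v) := by
        rw [hv]; exact perturb_feasible d xs hxsF i p q hqp t ht.1 ht.2
      have hmem : xs + t • v ∈ S := by
        refine ⟨hfeas, ?_⟩
        intro j r hlt
        have hz : xs j r = 0 := hxsS.2 j r hlt
        have hvz : v j r = 0 := by
          rcases eq_or_ne j i with rfl | hj
          · have hrq : r ≠ q := by intro h; rw [h, hgq] at hlt; exact lt_irrefl _ hlt
            have hrp : r ≠ p := by intro h; rw [h, hgp] at hlt; exact lt_irrefl _ hlt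
            rw [hvi r, if_neg hrq, if_neg hrp]; ring
          · rw [hvj j hj]; rfl
        have : (xs + t • v) j r = xs j r + t * v j r := rfl
        rw [this, hz, hvz]; ring
      have := hxsmin hmem
      simpa using this
    simp only []
    rw [hgp, hgq]
    linarith

/-- for a single externality class, travel times with a differentiable
convex potential and constant externality factors, and a feasible budget `B`, a price
`λ ≥ 0` is a market equilibrium price for the tradable credit scheme `(B, g)` iff
`λ̲ ≤ λ ≤ λ̄`, where `λ̲ = min{λ ≥ 0 : ∃ x ∈ WE(λ), G(x) ≤ B}` and
`λ̄ = sup({λ ≥ 0 : ∃ x ∈ WE(λ), G(x) ≥ B} ∪ {0}) ∈ [0, ∞]`. -/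
theorem market_equilibrium_price_iff_in_interval
    [∀ i, Nonempty (P i)]
    (d : I → ℝ) (hd : ∀ i, 0 < d i)
    (τ : (∀ i, P i → ℝ) → ∀ i, P i → ℝ)
    (Φ : (∀ i, P i → ℝ) → ℝ)
    (hΦdiff : Differentiable ℝ Φ) (hΦconv : ConvexOn ℝ Set.univ Φ)
    (hΦgrad : ∀ x, Feasible d x →
      ∀ i p, fderiv ℝ Φ x (Pi.single i (Pi.single p (1 : ℝ))) = τ x i p)
    (g : ∀ i, P i → ℝ) (hg : ∀ i p, 0 ≤ g i p)
    (B : ℝ) (hB : 0 ≤ B)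
    (hBfeas : ∃ x, Feasible d x ∧ Gtot g x ≤ B)
    (lam : ℝ) (hlam : 0 ≤ lam) :
    IsMarketEqPrice d τ g B lam ↔
      (sInf {l : ℝ | 0 ≤ l ∧
          ∃ x, IsWardrop d (fun y i p => τ y i p + l * g i p) x ∧ Gtot g x ≤ B} ≤ lam ∧
        (lam : EReal) ≤ sSup ((fun l : ℝ => (l : EReal)) ''
          {l : ℝ | 0 ≤ l ∧
            ∃ x, IsWardrop d (fun y i p => τ y i p + l * g i p) x ∧ B ≤ Gtot g x}
          ∪ {(0 : EReal)})) := by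
  classical
  have hd0 : ∀ i, 0 ≤ d i := fun i => (hd i).le
  set Slow := {l : ℝ | 0 ≤ l ∧
      ∃ x, IsWardrop d (fun y i p => τ y i p + l * g i p) x ∧ Gtot g x ≤ B} with hSlowdef
  set Shigh := {l : ℝ | 0 ≤ l ∧
      ∃ x, IsWardrop d (fun y i p => τ y i p + l * g i p) x ∧ B ≤ Gtot g x} with hShighdef
  have hbddlow : BddBelow Slow := ⟨0, fun a ha => ha.1⟩
  obtain ⟨lam0, hlam0, hlam0prop⟩ := slow_nonempty d hd τ Φ hΦdiff hΦgrad g B hBfeas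
  have hSlowne : Slow.Nonempty := ⟨lam0, hlam0, hlam0prop lam0 le_rfl⟩
  have hfvalcont : ∀ l : ℝ, Continuous (fun z : ∀ i, P i → ℝ => Φ z + l * Gtot g z) :=
    fun l => hΦdiff.continuous.add (continuous_const.mul (Gtot_continuous g))
  constructor
  · rintro ⟨x, hW, hGB, hcomp⟩
    constructor
    · exact csInf_le hbddlow ⟨hlam, x, hW, hGB⟩
    · rcases eq_or_lt_of_le hlam with heq | hpos
      · rw [← heq]
        have h00 : ((0:ℝ) : EReal) = (0 : EReal) := EReal.coe_zero
        rw [h00]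
        exact le_sSup (Set.mem_union_right _ rfl)
      · have hGeq : Gtot g x = B := by
          rcases mul_eq_zero.1 hcomp with h | h
          · exact absurd h (ne_of_gt hpos)
          · have := sub_eq_zero.1 h; linarith
        exact le_sSup (Set.mem_union_left _ ⟨lam, ⟨hlam, x, hW, hGeq.ge⟩, rfl⟩)
  · rintro ⟨h1, h2⟩
    -- the infimum of Slow is attained
    have hmem_inf : 0 ≤ sInf Slow ∧ ∃ z, Feasible d z ∧
        (∀ y, Feasible d y → Φ z + sInf Slow * Gtot g z ≤ Φ y + sInf Slow * Gtot g y) ∧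
        Gtot g z ≤ B := by
      obtain ⟨u, hanti, hutend, humem⟩ := exists_seq_tendsto_sInf hSlowne hbddlow
      choose xu hxuW hxuB using fun n => (humem n).2
      obtain ⟨z, hzF, hzmin, hzC⟩ := lim_min d Φ hΦdiff g u (sInf Slow) hutend xu
        (fun n => (hxuW n).1)
        (fun n => isWardrop_imp_min d τ Φ hΦdiff hΦconv hΦgrad g (u n) (xu n) (hxuW n))
        (Set.Iic B) isClosed_Iic hxuB
      exact ⟨le_csInf hSlowne (fun b hb => hb.1), z, hzF, hzmin, hzC⟩
    obtain ⟨hInf0, z, hzF, hzmin, hzB⟩ := hmem_inf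
    -- x0 : a minimizer at price lam with externality ≤ B
    have hx0 : ∃ x0, Feasible d x0 ∧
        (∀ y, Feasible d y → Φ x0 + lam * Gtot g x0 ≤ Φ y + lam * Gtot g y) ∧
        Gtot g x0 ≤ B := by
      rcases eq_or_lt_of_le h1 with heq | hlt
      · exact ⟨z, hzF, heq ▸ hzmin, hzB⟩
      · obtain ⟨w, hwF, hwmin⟩ := exists_min d hd0 _ (hfvalcont lam)
        have hmono : Gtot g w ≤ Gtot g z := by
          have hA := hzmin w hwF
          have hB2 := hwmin z hzF
          by_contra hcon
          push_neg at hcon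
          nlinarith [hA, hB2, hlt, hcon]
        exact ⟨w, hwF, hwmin, le_trans hmono hzB⟩
    obtain ⟨x0, hx0F, hx0min, hx0B⟩ := hx0
    rcases eq_or_lt_of_le hlam with heq | hpos
    · exact ⟨x0, min_imp_isWardrop d τ Φ hΦdiff hΦgrad g lam x0 hx0F hx0min, hx0B,
        by rw [← heq, zero_mul]⟩
    -- lam > 0 : we also need a minimizer with externality ≥ B
    have hx1 : ∃ x1, Feasible d x1 ∧
        (∀ y, Feasible d y → Φ x1 + lam * Gtot g x1 ≤ Φ y + lam * Gtot g y) ∧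
        B ≤ Gtot g x1 := by
      by_cases hex : ∃ μ ∈ Shigh, lam ≤ μ
      · obtain ⟨μ, hμS, hlamμ⟩ := hex
        obtain ⟨hμ0, x', hx'W, hx'B⟩ := hμS
        have hx'min := isWardrop_imp_min d τ Φ hΦdiff hΦconv hΦgrad g μ x' hx'W
        rcases eq_or_lt_of_le hlamμ with heq2 | hlt2
        · exact ⟨x', hx'W.1, by rw [heq2]; exact hx'min, hx'B⟩
        · obtain ⟨w, hwF, hwmin⟩ := exists_min d hd0 _ (hfvalcont lam)
          have hmono : Gtot g x' ≤ Gtot g w := by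
            have hA := hwmin x' hx'W.1
            have hB2 := hx'min w hwF
            by_contra hcon
            push_neg at hcon
            nlinarith [hA, hB2, hlt2, hcon]
          exact ⟨w, hwF, hwmin, le_trans hx'B hmono⟩
      · push_neg at hex
        have hShne : Shigh.Nonempty := by
          by_contra hemp
          rw [Set.not_nonempty_iff_eq_empty] at hemp
          rw [hemp] at h2
          simp only [Set.image_empty, Set.empty_union, csSup_singleton] at h2
          have : lam ≤ (0:ℝ) := by exact_mod_cast h2
          linarith
        have hbddhigh : BddAbove Shigh := ⟨lam, fun μ hμ => (hex μ hμ).le⟩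
        have hs1lam : lam ≤ sSup Shigh := by
          have hub : ∀ a ∈ ((fun l : ℝ => (l : EReal)) '' Shigh ∪ {(0:EReal)}),
              a ≤ ((max (sSup Shigh) 0 : ℝ) : EReal) := by
            rintro a (⟨μ, hμ, rfl⟩ | ha)
            · exact EReal.coe_le_coe_iff.2 (le_trans (le_csSup hbddhigh hμ) (le_max_left _ _))
            · rw [Set.mem_singleton_iff] at ha
              rw [ha, ← EReal.coe_zero]
              exact EReal.coe_le_coe_iff.2 (le_max_right _ _)
          have hle : (lam : EReal) ≤ ((max (sSup Shigh) 0 : ℝ) : EReal) :=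
            le_trans h2 (sSup_le hub)
          have hle' : lam ≤ max (sSup Shigh) 0 := EReal.coe_le_coe_iff.1 hle
          rcases le_max_iff.1 hle' with h | h
          · exact h
          · linarith
        have hs1eq : sSup Shigh = lam :=
          le_antisymm (csSup_le hShne (fun μ hμ => (hex μ hμ).le)) hs1lam
        obtain ⟨u, hmono', hutend, humem⟩ := exists_seq_tendsto_sSup hShne hbddhigh
        choose xu hxuW hxuB using fun n => (humem n).2
        obtain ⟨z1, hz1F, hz1min, hz1C⟩ := lim_min d Φ hΦdiff g u (sSup Shigh) hutend xu
          (fun n => (hxuW n).1)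
          (fun n => isWardrop_imp_min d τ Φ hΦdiff hΦconv hΦgrad g (u n) (xu n) (hxuW n))
          (Set.Ici B) isClosed_Ici hxuB
        exact ⟨z1, hz1F, by rw [← hs1eq]; exact hz1min, hz1C⟩
    obtain ⟨x1, hx1F, hx1min, hx1B⟩ := hx1
    by_cases hcase : Gtot g x0 = B
    · exact ⟨x0, min_imp_isWardrop d τ Φ hΦdiff hΦgrad g lam x0 hx0F hx0min, hcase.le,
        by rw [hcase, sub_self, mul_zero]⟩
    · have hG0 : Gtot g x0 < B := lt_of_le_of_ne hx0B hcase
      have hG01 : Gtot g x0 < Gtot g x1 := lt_of_lt_of_le hG0 hx1B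
      set t := (B - Gtot g x0) / (Gtot g x1 - Gtot g x0) with hT
      have ht0 : 0 ≤ t := div_nonneg (by linarith) (by linarith)
      have ht1 : t ≤ 1 := (div_le_one (by linarith)).2 (by linarith)
      set xm := (1 - t) • x0 + t • x1 with hxm
      have hGm : Gtot g xm = B := by
        rw [hxm, Gtot_add, Gtot_smul, Gtot_smul]
        have hne : Gtot g x1 - Gtot g x0 ≠ 0 := by linarith
        have : t * (Gtot g x1 - Gtot g x0) = B - Gtot g x0 := by
          rw [hT]; field_simp
        linarith [this]
      have hmF : Feasible d xm := by
        constructor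
        · intro i p
          have happ : xm i p = (1 - t) * x0 i p + t * x1 i p := rfl
          rw [happ]
          have h01 := hx0F.1 i p
          have h11 := hx1F.1 i p
          nlinarith
        · intro i
          have happ : ∀ p, xm i p = (1 - t) * x0 i p + t * x1 i p := fun p => rfl
          rw [Finset.sum_congr rfl fun p _ => happ p, Finset.sum_add_distrib,
            ← Finset.mul_sum, ← Finset.mul_sum, hx0F.2 i, hx1F.2 i]
          ring
      have hmmin : ∀ y, Feasible d y → Φ xm + lam * Gtot g xm ≤ Φ y + lam * Gtot g y := by
        intro y hy
        have hc := (fval_convex Φ hΦconv g lam).2 (Set.mem_univ x0) (Set.mem_univ x1)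
          (by linarith : (0:ℝ) ≤ 1 - t) ht0 (by ring)
        simp only [smul_eq_mul] at hc
        have h0 := hx0min y hy
        have h1' := hx1min y hy
        have hm0 := mul_le_mul_of_nonneg_left h0 (by linarith : (0:ℝ) ≤ 1 - t)
        have hm1 := mul_le_mul_of_nonneg_left h1' ht0
        rw [hxm]
        nlinarith [hc, hm0, hm1]
      exact ⟨xm, min_imp_isWardrop d τ Φ hΦdiff hΦgrad g lam xm hmF hmmin, hGm.le,
        by rw [hGm, sub_self, mul_zero]⟩
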